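/- Bound on the last position: let μ₀ ∈ P(ℤ), ε > 0, and R > R_{μ₀}(ε) where R_{μ₀}(ε) = min{R ∈ ℕ : μ₀(⟦−R+1,R−1⟧) > 1−ε}. If w is a nearest-neighbour trajectory of length n starting at 0 whose empirical measure ℓ(w) satisfies ‖ℓ(w) − μ₀‖ < 2^{−R} ε in the Kantorovich–Rubinstein norm on P(Z̄), then |w_n| ≤ R + 2εn. -/

import Mathlib

open MeasureTheory

/-- The two-point compactification `Z̄ = ℤ ∪ {−∞, +∞}` of `ℤ`:
`Sum.inl n` is the integer `n`, `Sum.inr false` is `−∞`, `Sum.inr true` is `+∞`. -/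
abbrev Zbar : Type := ℤ ⊕ Bool

/-- The map `φ : Z̄ → [-1,1]`, `φ(k) = sign(k)(1 − 2^{−|k|})`, `φ(±∞) = ±1`,
inducing the metric `d(h,k) = |φ(h) − φ(k)|` on `Z̄`. -/
noncomputable def phi : Zbar → ℝ
  | Sum.inr false => -1
  | Sum.inr true => 1
  | Sum.inl n => if 0 ≤ n then 1 - (2 : ℝ) ^ (-n) else -1 + (2 : ℝ) ^ n

/-- Kantorovich–Rubinstein distance between the empirical measure
`ℓ(w) = (1/n) ∑_{j=1}^n δ_{w_j}` of a trajectory and a probability measure `μ₀` on `ℤ`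
(both viewed in `P(Z̄)`): the supremum over functions `f : Z̄ → ℝ` that are `1`-Lipschitz
for the metric `d(h,k) = |φ h − φ k|` and bounded by `1` of `∫ f dℓ(w) − ∫ f dμ₀`. -/
noncomputable def krDistEmp (n : ℕ) (w : ℕ → ℤ) (μ₀ : Measure ℤ) : ℝ :=
  sSup {r : ℝ | ∃ f : Zbar → ℝ,
    (∀ a b : Zbar, |f a - f b| ≤ |phi a - phi b|) ∧ (∀ a, |f a| ≤ 1) ∧
    r = (1 / (n : ℝ)) * ∑ j ∈ Finset.Icc 1 n, f (Sum.inl (w j))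
          - ∫ z, f (Sum.inl z) ∂μ₀}

/-- `R_{μ₀}(ε) = min {R ∈ ℕ : μ₀(⟦−R+1, R−1⟧) > 1 − ε}`. -/
noncomputable def Rmu (μ₀ : Measure ℤ) (ε : ℝ) : ℕ :=
  sInf {R : ℕ | ENNReal.ofReal (1 - ε) < μ₀ {z : ℤ | -(R : ℤ) + 1 ≤ z ∧ z ≤ (R : ℤ) - 1}}

/-- the positive test function -/
noncomputable def fplus (R : ℕ) : Zbar → ℝ
  | Sum.inl z => if (R:ℤ) ≤ z then (2:ℝ) ^ (-(R:ℤ)) else 0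
  | Sum.inr true => (2:ℝ) ^ (-(R:ℤ))
  | Sum.inr false => 0

def negZ : Zbar → Zbar
  | Sum.inl z => Sum.inl (-z)
  | Sum.inr b => Sum.inr (!b)

lemma phi_negZ (a : Zbar) : phi (negZ a) = - phi a := by
  rcases a with z | b
  · by_cases h : 0 ≤ z
    · by_cases h2 : 0 ≤ -z
      · have hz : z = 0 := by omega
        subst hz; simp [negZ, phi]
      · simp only [negZ, phi, if_pos h, if_neg h2, neg_neg]; ring
    · have h2 : 0 ≤ -z := by omega
      simp only [negZ, phi, if_pos h2, if_neg h, neg_neg]; ring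
  · cases b <;> simp [negZ, phi]

lemma fplus_cases (R : ℕ) (hR : 1 ≤ R) (a : Zbar) :
    (fplus R a = (2:ℝ) ^ (-(R:ℤ)) ∧ 1 - (2:ℝ) ^ (-(R:ℤ)) ≤ phi a) ∨
    (fplus R a = 0 ∧ phi a ≤ 1 - 2 * (2:ℝ) ^ (-(R:ℤ))) := by
  have hc : (0:ℝ) < 2 ^ (-(R:ℤ)) := zpow_pos two_pos _
  have hc2 : (2:ℝ) ^ (-(R:ℤ)) ≤ 1/2 := by
    have : (2:ℝ) ^ (-(R:ℤ)) ≤ 2 ^ (-1 : ℤ) := zpow_le_zpow_right₀ one_le_two (by omega)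
    simpa using this
  rcases a with z | b
  · by_cases h : (R:ℤ) ≤ z
    · left
      have hz : 0 ≤ z := by omega
      have hle : (2:ℝ) ^ (-z) ≤ 2 ^ (-(R:ℤ)) := zpow_le_zpow_right₀ one_le_two (by omega)
      refine ⟨by simp [fplus, h], ?_⟩
      simp only [phi, if_pos hz]; linarith
    · right
      refine ⟨by simp [fplus, h], ?_⟩
      by_cases hz : 0 ≤ z
      · have hle : (2:ℝ) ^ (-(R:ℤ) + 1) ≤ 2 ^ (-z) := zpow_le_zpow_right₀ one_le_two (by omega)
        have he : (2:ℝ) ^ (-(R:ℤ) + 1) = 2 * 2 ^ (-(R:ℤ)) := by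
          rw [zpow_add₀ (by norm_num : (2:ℝ) ≠ 0)]; ring
        simp only [phi, if_pos hz]; linarith
      · have hle : (2:ℝ) ^ z ≤ 2 ^ (0:ℤ) := zpow_le_zpow_right₀ one_le_two (by omega)
        simp only [phi, if_neg hz]
        simp only [zpow_zero] at hle
        linarith
  · cases b
    · right; exact ⟨rfl, by simp only [phi]; linarith⟩
    · left; exact ⟨rfl, by simp only [phi]; linarith⟩

lemma fplus_lip (R : ℕ) (hR : 1 ≤ R) (a b : Zbar) :
    |fplus R a - fplus R b| ≤ |phi a - phi b| := by
  have hc : (0:ℝ) < 2 ^ (-(R:ℤ)) := zpow_pos two_pos _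
  rcases fplus_cases R hR a with ⟨ha1, ha2⟩ | ⟨ha1, ha2⟩ <;>
    rcases fplus_cases R hR b with ⟨hb1, hb2⟩ | ⟨hb1, hb2⟩
  · rw [ha1, hb1]; simp
  · rw [ha1, hb1]
    have h1 : phi a - phi b ≥ 2 ^ (-(R:ℤ)) := by linarith
    calc |(2:ℝ) ^ (-(R:ℤ)) - 0| = 2 ^ (-(R:ℤ)) := by rw [sub_zero, abs_of_pos hc]
    _ ≤ phi a - phi b := h1
    _ ≤ |phi a - phi b| := le_abs_self _
  · rw [ha1, hb1]
    have h1 : phi b - phi a ≥ 2 ^ (-(R:ℤ)) := by linarith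
    calc |(0:ℝ) - 2 ^ (-(R:ℤ))| = 2 ^ (-(R:ℤ)) := by rw [zero_sub, abs_neg, abs_of_pos hc]
    _ ≤ phi b - phi a := h1
    _ ≤ |phi a - phi b| := by rw [abs_sub_comm]; exact le_abs_self _
  · rw [ha1, hb1]; simp

lemma fplus_bdd (R : ℕ) (hR : 1 ≤ R) (a : Zbar) : |fplus R a| ≤ 1 := by
  have hc : (0:ℝ) < 2 ^ (-(R:ℤ)) := zpow_pos two_pos _
  have hc2 : (2:ℝ) ^ (-(R:ℤ)) ≤ 1 := by
    have : (2:ℝ) ^ (-(R:ℤ)) ≤ 2 ^ (0:ℤ) := zpow_le_zpow_right₀ one_le_two (by omega)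
    simpa using this
  rcases fplus_cases R hR a with ⟨ha1, _⟩ | ⟨ha1, _⟩ <;> rw [ha1]
  · rw [abs_of_pos hc]; exact hc2
  · simp

lemma middle_big (μ₀ : Measure ℤ) [IsProbabilityMeasure μ₀] (ε : ℝ) (hε : 0 < ε)
    (R : ℕ) (hR : Rmu μ₀ ε < R) :
    ENNReal.ofReal (1 - ε) < μ₀ {z : ℤ | -(R : ℤ) + 1 ≤ z ∧ z ≤ (R : ℤ) - 1} := by
  set S : ℕ → Set ℤ := fun k => {z : ℤ | -(k : ℤ) + 1 ≤ z ∧ z ≤ (k : ℤ) - 1} with hS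
  have hmono : Monotone S := by
    intro a b hab z hz
    simp only [S, Set.mem_setOf_eq] at hz ⊢
    omega
  have hunion : ⋃ k, S k = Set.univ := by
    ext z
    simp only [Set.mem_iUnion, Set.mem_univ, iff_true, S, Set.mem_setOf_eq]
    exact ⟨z.natAbs + 1, by omega, by omega⟩
  have hsup : (1 : ENNReal) = ⨆ k, μ₀ (S k) := by
    rw [← measure_univ (μ := μ₀), ← hunion, hmono.directed_le.measure_iUnion]
  have hlt1 : ENNReal.ofReal (1 - ε) < 1 := by
    rw [← ENNReal.ofReal_one]
    exact (ENNReal.ofReal_lt_ofReal_iff one_pos).mpr (by linarith)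
  obtain ⟨k, hk⟩ := lt_iSup_iff.mp (hsup ▸ hlt1)
  have hne : {R : ℕ | ENNReal.ofReal (1 - ε) < μ₀ {z : ℤ | -(R : ℤ) + 1 ≤ z ∧ z ≤ (R : ℤ) - 1}}.Nonempty := ⟨k, hk⟩
  have hmem := Nat.sInf_mem hne
  have hsub : S (Rmu μ₀ ε) ⊆ S R := hmono (le_of_lt hR)
  exact lt_of_lt_of_le hmem (measure_mono hsub)

lemma occ_lt (μ₀ : Measure ℤ) [IsProbabilityMeasure μ₀] (ε : ℝ) (hε : 0 < ε)
    (R : ℕ) (hRmu : Rmu μ₀ ε < R) (hR : 1 ≤ R)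
    (n : ℕ) (hn : 1 ≤ n) (w : ℕ → ℤ)
    (f : Zbar → ℝ) (p : ℤ → Prop) [DecidablePred p]
    (hf1 : ∀ a b : Zbar, |f a - f b| ≤ |phi a - phi b|) (hf2 : ∀ a, |f a| ≤ 1)
    (hfp : ∀ z, f (Sum.inl z) = if p z then (2:ℝ) ^ (-(R:ℤ)) else 0)
    (hpz : ∀ z, p z → ¬(-(R : ℤ) + 1 ≤ z ∧ z ≤ (R : ℤ) - 1))
    (hclose : krDistEmp n w μ₀ < (2 : ℝ) ^ (-(R : ℤ)) * ε) :
    (((Finset.Icc 1 n).filter (fun j => p (w j))).card : ℝ) < 2 * ε * n := by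
  set c : ℝ := (2:ℝ) ^ (-(R:ℤ)) with hcdef
  have hc : (0:ℝ) < c := zpow_pos two_pos _
  have hnpos : (0:ℝ) < n := by exact_mod_cast hn
  -- bounded above
  have hbdd : BddAbove {r : ℝ | ∃ f : Zbar → ℝ,
      (∀ a b : Zbar, |f a - f b| ≤ |phi a - phi b|) ∧ (∀ a, |f a| ≤ 1) ∧
      r = (1 / (n : ℝ)) * ∑ j ∈ Finset.Icc 1 n, f (Sum.inl (w j))
            - ∫ z, f (Sum.inl z) ∂μ₀} := by
    refine ⟨2, fun r hr => ?_⟩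
    obtain ⟨g, hg1, hg2, hg3⟩ := hr
    have hsum : ∑ j ∈ Finset.Icc 1 n, g (Sum.inl (w j)) ≤ n := by
      calc ∑ j ∈ Finset.Icc 1 n, g (Sum.inl (w j)) ≤ ∑ j ∈ Finset.Icc 1 n, 1 :=
        Finset.sum_le_sum (fun j _ => (abs_le.mp (hg2 _)).2)
      _ = n := by simp
    have hA : (1 / (n : ℝ)) * ∑ j ∈ Finset.Icc 1 n, g (Sum.inl (w j)) ≤ 1 := by
      rw [one_div, inv_mul_le_iff₀ hnpos, mul_one]; exact hsum
    have hB : ‖∫ z, g (Sum.inl z) ∂μ₀‖ ≤ 1 := by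
      have := norm_integral_le_of_norm_le_const (μ := μ₀) (f := fun z => g (Sum.inl z)) (C := 1)
        (Filter.Eventually.of_forall (fun z => by simpa using hg2 (Sum.inl z)))
      simpa using this
    have hB' : -1 ≤ ∫ z, g (Sum.inl z) ∂μ₀ := by
      have := abs_le.mp (by rwa [Real.norm_eq_abs] at hB)
      linarith [this.1]
    rw [hg3]; linarith
  -- membership
  have hmem : (1 / (n : ℝ)) * ∑ j ∈ Finset.Icc 1 n, f (Sum.inl (w j))
      - ∫ z, f (Sum.inl z) ∂μ₀ ∈ {r : ℝ | ∃ f : Zbar → ℝ,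
      (∀ a b : Zbar, |f a - f b| ≤ |phi a - phi b|) ∧ (∀ a, |f a| ≤ 1) ∧
      r = (1 / (n : ℝ)) * ∑ j ∈ Finset.Icc 1 n, f (Sum.inl (w j))
            - ∫ z, f (Sum.inl z) ∂μ₀} := ⟨f, hf1, hf2, rfl⟩
  have hle : (1 / (n : ℝ)) * ∑ j ∈ Finset.Icc 1 n, f (Sum.inl (w j))
      - ∫ z, f (Sum.inl z) ∂μ₀ < c * ε :=
    lt_of_le_of_lt (le_csSup hbdd hmem) hclose
  -- compute the sum
  have hsum : ∑ j ∈ Finset.Icc 1 n, f (Sum.inl (w j))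
      = c * ((Finset.Icc 1 n).filter (fun j => p (w j))).card := by
    calc ∑ j ∈ Finset.Icc 1 n, f (Sum.inl (w j))
        = ∑ j ∈ Finset.Icc 1 n, (if p (w j) then c else 0) := by
          exact Finset.sum_congr rfl (fun j _ => hfp (w j))
      _ = ∑ j ∈ (Finset.Icc 1 n).filter (fun j => p (w j)), c := (Finset.sum_filter _ _).symm
      _ = c * ((Finset.Icc 1 n).filter (fun j => p (w j))).card := by
          rw [Finset.sum_const, nsmul_eq_mul, mul_comm]
  -- compute the integral
  have hint : ∫ z, f (Sum.inl z) ∂μ₀ = (μ₀ {z | p z}).toReal * c := by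
    have : (fun z => f (Sum.inl z)) = Set.indicator {z | p z} (fun _ => c) := by
      funext z
      rw [hfp z, Set.indicator_apply]
      simp [Set.mem_setOf_eq]
    rw [this, integral_indicator_const c (by trivial), smul_eq_mul]
    rfl
  -- measure bound
  have hmeas : (μ₀ {z | p z}).toReal < ε := by
    have hmid := middle_big μ₀ ε hε R hRmu
    set Smid : Set ℤ := {z : ℤ | -(R : ℤ) + 1 ≤ z ∧ z ≤ (R : ℤ) - 1} with hSmid
    have hsub : {z | p z} ⊆ Smidᶜ := fun z hz => hpz z hz
    have h1 : μ₀ {z | p z} ≤ μ₀ Smidᶜ := measure_mono hsub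
    have h2 : μ₀ Smidᶜ = 1 - μ₀ Smid := by
      rw [measure_compl (by trivial) (measure_ne_top _ _), measure_univ]
    have hSle : μ₀ Smid ≤ 1 := prob_le_one
    have h3 : (μ₀ Smidᶜ).toReal = 1 - (μ₀ Smid).toReal := by
      rw [h2, ENNReal.toReal_sub_of_le hSle (by norm_num)]
      norm_num
    have h4 : 1 - ε < (μ₀ Smid).toReal := by
      have := (ENNReal.toReal_lt_toReal (by simp) (measure_ne_top μ₀ Smid)).mpr hmid
      have h5 : 1 - ε ≤ (ENNReal.ofReal (1 - ε)).toReal := by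
        rw [ENNReal.toReal_ofReal']; exact le_max_left _ _
      linarith
    have h6 : (μ₀ {z | p z}).toReal ≤ (μ₀ Smidᶜ).toReal :=
      ENNReal.toReal_mono (measure_ne_top _ _) h1
    linarith
  -- conclude
  set N : ℝ := (((Finset.Icc 1 n).filter (fun j => p (w j))).card : ℝ)
  rw [hsum, hint] at hle
  have key : (1 / (n:ℝ)) * (c * N) < 2 * (c * ε) := by
    nlinarith [(μ₀ {z | p z}).toReal, hc]
  have : c * N < 2 * (c * ε) * n := by
    have := (mul_lt_mul_of_pos_left key hnpos)
    rw [← mul_assoc, mul_one_div_cancel (ne_of_gt hnpos), one_mul] at this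
    linarith
  nlinarith

lemma traj_diff (n : ℕ) (w : ℕ → ℤ)
    (hstep : ∀ j, 1 ≤ j → j < n → (w (j + 1) - w j = 1 ∨ w (j + 1) - w j = -1)) :
    ∀ j k, 1 ≤ j → j ≤ k → k ≤ n → |w k - w j| ≤ (k : ℤ) - j := by
  intro j k hj hjk hkn
  induction k, hjk using Nat.le_induction with
  | base => simp
  | succ k hk ih =>
    have hkn' : k ≤ n := by omega
    have ih' := ih hkn'
    have hs := hstep k (le_trans hj hk) (by omega)
    rw [abs_le] at ih' ⊢
    rcases hs with h | h <;> constructor <;> push_cast <;> omega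

/-- Bound on the last position of a trajectory whose empirical measure is
`2^{-R} ε`-close to a central probability measure `μ₀ ∈ P(ℤ)`. -/
theorem bound_on_last_position
    (μ₀ : Measure ℤ) [IsProbabilityMeasure μ₀] (ε : ℝ) (hε : 0 < ε)
    (R : ℕ) (hR : Rmu μ₀ ε < R)
    (n : ℕ) (hn : 1 ≤ n) (w : ℕ → ℤ) (hw0 : w 1 = 0)
    (hstep : ∀ j, 1 ≤ j → j < n → (w (j + 1) - w j = 1 ∨ w (j + 1) - w j = -1))
    (hclose : krDistEmp n w μ₀ < (2 : ℝ) ^ (-(R : ℤ)) * ε) :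
    |(w n : ℝ)| ≤ R + 2 * ε * n := by
  have hR1 : 1 ≤ R := by omega
  have hnpos : (0:ℝ) < n := by exact_mod_cast hn
  have hεn : 0 ≤ 2 * ε * n := by positivity
  have hwn : |w n - w 1| ≤ (n : ℤ) - 1 := traj_diff n w hstep 1 n le_rfl hn le_rfl
  rw [hw0, sub_zero] at hwn
  by_cases hbig : (R:ℤ) < w n
  · -- positive excursion
    have hcard := occ_lt μ₀ ε hε R hR hR1 n hn w (fplus R) (fun z => (R:ℤ) ≤ z)
      (fplus_lip R hR1) (fplus_bdd R hR1) (fun z => by simp [fplus])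
      (fun z hz => by omega) hclose
    set d : ℕ := (w n - R).toNat with hd
    have hdval : (d : ℤ) = w n - R := Int.toNat_of_nonneg (by omega)
    have hdn : d ≤ n := by rw [abs_le] at hwn; omega
    have hsub : Finset.Icc (n - d + 1) n ⊆
        (Finset.Icc 1 n).filter (fun j => (R:ℤ) ≤ w j) := by
      intro j hj
      rw [Finset.mem_Icc] at hj
      have hj1 : 1 ≤ j := by omega
      have hdiff := traj_diff n w hstep j n hj1 hj.2 le_rfl
      rw [abs_le] at hdiff
      rw [Finset.mem_filter, Finset.mem_Icc]
      refine ⟨⟨hj1, hj.2⟩, ?_⟩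
      have : (j:ℤ) ≥ (n:ℤ) - d + 1 := by omega
      omega
    have hcard2 : d ≤ ((Finset.Icc 1 n).filter (fun j => (R:ℤ) ≤ w j)).card := by
      calc d = (Finset.Icc (n - d + 1) n).card := by rw [Nat.card_Icc]; omega
      _ ≤ _ := Finset.card_le_card hsub
    have hcard3 : (d : ℝ) ≤ ((Finset.Icc 1 n).filter (fun j => (R:ℤ) ≤ w j)).card := by
      exact_mod_cast hcard2
    have hdr : (d : ℝ) = (w n : ℝ) - R := by exact_mod_cast hdval
    have hwpos : (0:ℝ) < (w n : ℝ) := by exact_mod_cast (by omega : (0:ℤ) < w n)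
    rw [abs_of_pos hwpos]
    linarith
  · by_cases hsmall : w n < -(R:ℤ)
    · -- negative excursion
      have hfp : ∀ z : ℤ, fplus R (negZ (Sum.inl z)) = if z ≤ -(R:ℤ) then (2:ℝ)^(-(R:ℤ)) else 0 := by
        intro z
        simp only [negZ, fplus]
        congr 1
        exact propext ⟨fun h => by omega, fun h => by omega⟩
      have hcard := occ_lt μ₀ ε hε R hR hR1 n hn w (fun a => fplus R (negZ a))
        (fun z => z ≤ -(R:ℤ))
        (fun a b => by
          calc |fplus R (negZ a) - fplus R (negZ b)| ≤ |phi (negZ a) - phi (negZ b)| :=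
            fplus_lip R hR1 _ _
          _ = |phi a - phi b| := by rw [phi_negZ, phi_negZ, show -phi a - -phi b = -(phi a - phi b) by ring, abs_neg]
          )
        (fun a => fplus_bdd R hR1 _) hfp
        (fun z hz => by omega) hclose
      set d : ℕ := (-w n - R).toNat with hd
      have hdval : (d : ℤ) = -w n - R := Int.toNat_of_nonneg (by omega)
      have hdn : d ≤ n := by rw [abs_le] at hwn; omega
      have hsub : Finset.Icc (n - d + 1) n ⊆
          (Finset.Icc 1 n).filter (fun j => w j ≤ -(R:ℤ)) := by
        intro j hj
        rw [Finset.mem_Icc] at hj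
        have hj1 : 1 ≤ j := by omega
        have hdiff := traj_diff n w hstep j n hj1 hj.2 le_rfl
        rw [abs_le] at hdiff
        rw [Finset.mem_filter, Finset.mem_Icc]
        refine ⟨⟨hj1, hj.2⟩, ?_⟩
        have : (j:ℤ) ≥ (n:ℤ) - d + 1 := by omega
        omega
      have hcard2 : d ≤ ((Finset.Icc 1 n).filter (fun j => w j ≤ -(R:ℤ))).card := by
        calc d = (Finset.Icc (n - d + 1) n).card := by rw [Nat.card_Icc]; omega
        _ ≤ _ := Finset.card_le_card hsub
      have hcard3 : (d : ℝ) ≤ ((Finset.Icc 1 n).filter (fun j => w j ≤ -(R:ℤ))).card := by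
        exact_mod_cast hcard2
      have hdr : (d : ℝ) = -(w n : ℝ) - R := by exact_mod_cast hdval
      have hwneg : (w n : ℝ) < 0 := by exact_mod_cast (by omega : w n < (0:ℤ))
      rw [abs_of_neg hwneg]
      linarith
    · -- central case
      have habs : |w n| ≤ (R:ℤ) := by rw [abs_le]; omega
      have : |(w n : ℝ)| ≤ (R:ℝ) := by exact_mod_cast habs
      linarith
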